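/- Order of polynomial extrapolation: suppose a one-step method has an asymptotic error expansion u_h(t+dt) = u(t+dt) + Σ_{m=p}^{p+k−2} e_m h^m + O(h^{p+k−1}) for fixed coefficients e_m, uniformly for small h. If T_{j,1} = u_{h_j}(t+dt) with h_j = dt/n_j and T_{k,k} is obtained by evaluating at h=0 the unique function of the form q(h) = c − Σ_{m=p}^{p+k−2} a_m h^m interpolating the data, then T_{k,k} = u(t+dt) + O(dt^{p+k−1}) as dt → 0 (with n_1 < ... < n_k fixed). -/

import Mathlib

open Filter Polynomial

lemma sum_erase_fin_eq_Icc {k p : ℕ} [NeZero k] (hp : 1 ≤ p) (f : ℕ → ℝ) :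
    ∑ i ∈ Finset.univ.erase (0 : Fin k), f (p + (i : ℕ) - 1)
      = ∑ m ∈ Finset.Icc p (p + k - 2), f m := by
  have hk : 1 ≤ k := Nat.one_le_iff_ne_zero.mpr (NeZero.ne k)
  refine Finset.sum_bij' (fun i _ => p + (i : ℕ) - 1)
    (fun m hm => (⟨m - p + 1, ?_⟩ : Fin k)) ?_ ?_ ?_ ?_ ?_
  · have := Finset.mem_Icc.mp hm; omega
  · intro i hi
    have hi0 : (i : ℕ) ≠ 0 := by
      intro h
      exact (Finset.mem_erase.mp hi).1 (Fin.ext (by simp [h]))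
    have := i.isLt
    simp only [Finset.mem_Icc]; omega
  · intro m hm
    have := Finset.mem_Icc.mp hm
    simp only [Finset.mem_erase, Finset.mem_univ, and_true]
    intro h
    have : m - p + 1 = 0 := by simpa [Fin.ext_iff] using h
    omega
  · intro i hi
    have hi0 : (i : ℕ) ≠ 0 := by
      intro h
      exact (Finset.mem_erase.mp hi).1 (Fin.ext (by simp [h]))
    have := i.isLt
    apply Fin.ext; simp; omega
  · intro m hm
    have := Finset.mem_Icc.mp hm
    simp; omega
  · intro i hi; rfl
open Filter Polynomial

lemma vandermonde_type_injective {k p : ℕ} [NeZero k] (hp : 1 ≤ p)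
    (x : Fin k → ℝ) (hx : StrictMono x) (hxpos : ∀ j, 0 < x j)
    (v : Fin k → ℝ)
    (hv : ∀ j, v 0 + ∑ i ∈ Finset.univ.erase (0 : Fin k),
        v i * x j ^ (p + (i : ℕ) - 1) = 0) :
    v = 0 := by
  have hk : 1 ≤ k := Nat.one_le_iff_ne_zero.mpr (NeZero.ne k)
  set P : ℝ[X] := C (v 0) + ∑ i ∈ Finset.univ.erase (0 : Fin k),
      C (v i) * X ^ (p + (i : ℕ) - 1) with hP
  have hPeval : ∀ j, P.eval (x j) = 0 := by
    intro j
    simpa [hP, eval_finset_sum] using hv j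
  have hvi : ∀ i : Fin k, i ≠ 0 → v i = 0 := by
    rcases Nat.lt_or_ge k 2 with h2 | h2
    · intro i hi
      exact absurd (Fin.ext (by have := i.isLt; omega)) hi
    · set Q : ℝ[X] := ∑ i ∈ Finset.univ.erase (0 : Fin k),
          C (v i * ((p + (i : ℕ) - 1 : ℕ) : ℝ)) * X ^ ((i : ℕ) - 1) with hQ
      have hval1 : ∀ i : Fin k, i ∈ Finset.univ.erase (0 : Fin k) → 1 ≤ (i : ℕ) := by
        intro i hi
        have hi0 : (i : ℕ) ≠ 0 := by
          intro h
          exact (Finset.mem_erase.mp hi).1 (Fin.ext (by simp [h]))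
        omega
      have hPder : P.derivative = X ^ (p - 1) * Q := by
        rw [hP, hQ, derivative_add, derivative_C, zero_add, derivative_sum,
          Finset.mul_sum]
        refine Finset.sum_congr rfl fun i hi => ?_
        rw [derivative_C_mul_X_pow]
        have h1 := hval1 i hi
        have : p + (i : ℕ) - 1 - 1 = ((i : ℕ) - 1) + (p - 1) := by omega
        rw [this, pow_add]
        ring
      -- Rolle step
      have hroot : ∀ i : Fin (k - 1), ∃ z,
          (x ⟨(i : ℕ), by omega⟩ < z ∧ z < x ⟨(i : ℕ) + 1, by omega⟩) ∧ Q.eval z = 0 := by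
        intro i
        have hlt : (⟨(i : ℕ), by omega⟩ : Fin k) < ⟨(i : ℕ) + 1, by omega⟩ := by
          simp [Fin.lt_def]
        obtain ⟨z, hz, hz'⟩ := exists_deriv_eq_zero (f := fun t => P.eval t)
          (hx hlt) (P.continuous_aeval.continuousOn) (by simp only [hPeval])
        refine ⟨z, hz, ?_⟩
        have hzpos : 0 < z := lt_trans (hxpos _) hz.1
        have hd : P.derivative.eval z = 0 := by rw [← Polynomial.deriv]; exact hz'
        rw [hPder] at hd
        simp only [eval_mul, eval_pow, eval_X] at hd
        rcases mul_eq_zero.mp hd with h | h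
        · exact absurd h (pow_ne_zero _ (ne_of_gt hzpos))
        · exact h
      choose y hy hQy using hroot
      have hymono : StrictMono y := by
        intro i j hij
        calc y i < x ⟨(i : ℕ) + 1, by omega⟩ := (hy i).2
        _ ≤ x ⟨(j : ℕ), by omega⟩ := hx.monotone (by simp [Fin.le_def]; omega)
        _ < y j := (hy j).1
      have hQ0 : Q = 0 := by
        apply Q.eq_zero_of_natDegree_lt_card_of_eval_eq_zero hymono.injective hQy
        have hdeg : Q.natDegree ≤ k - 2 := by
          rw [hQ]
          apply Polynomial.natDegree_sum_le_of_forall_le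
          intro i hi
          refine le_trans (natDegree_mul_le) ?_
          simp only [natDegree_C, natDegree_X_pow, zero_add]
          have := i.isLt
          omega
        rw [Fintype.card_fin]
        omega
      intro i hi
      have hmem : i ∈ Finset.univ.erase (0 : Fin k) := Finset.mem_erase.mpr ⟨hi, Finset.mem_univ i⟩
      have hcoef := congrArg (fun q => Polynomial.coeff q ((i : ℕ) - 1)) hQ0
      simp only [hQ, Polynomial.finset_sum_coeff, coeff_C_mul, coeff_X_pow, coeff_zero] at hcoef
      rw [Finset.sum_eq_single i] at hcoef
      · rw [if_pos rfl, mul_one] at hcoef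
        have hne : ((p + (i : ℕ) - 1 : ℕ) : ℝ) ≠ 0 := by
          apply Nat.cast_ne_zero.mpr
          have := hval1 i hmem
          omega
        rcases mul_eq_zero.mp hcoef with h | h
        · exact h
        · exact absurd h hne
      · intro b hb hbne
        rw [if_neg, mul_zero]
        intro h
        apply hbne
        apply Fin.ext
        have h1 := hval1 i hmem
        have h2 := hval1 b hb
        omega
      · intro h; exact absurd hmem h
  have hv0 : v 0 = 0 := by
    have := hv 0
    rwa [Finset.sum_eq_zero (fun i hi => by
      rw [hvi i (Finset.mem_erase.mp hi).1, zero_mul]), add_zero] at this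
  funext i
  by_cases h : i = 0
  · rw [h]; exact hv0
  · exact hvi i h


/-- Order of polynomial extrapolation: if the one-step approximation has an
asymptotic error expansion `u_h = L + ∑_{m=p}^{p+k−2} e_m h^m + O(h^{p+k−1})`,
and for each `dt` the function `q(h) = c(dt) − ∑ a_m(dt) h^m` interpolates the
data `T_{j,1} = u_{h_j}` at `h_j = dt / n_j`, then the extrapolated value
`q(0) = c(dt)` satisfies `c(dt) = L + O(dt^{p+k−1})` as `dt → 0⁺`. -/
theorem extrapolation_order_increase (k p : ℕ) (hk : 1 ≤ k) (hp : 1 ≤ p)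
    (n : Fin k → ℝ) (hn : StrictMono n) (hnpos : ∀ j, 0 < n j)
    (L : ℝ) (u : ℝ → ℝ) (e : ℕ → ℝ)
    (hexp : (fun h : ℝ => u h - (L + ∑ m ∈ Finset.Icc p (p + k - 2), e m * h ^ m))
        =O[nhdsWithin 0 (Set.Ioi 0)] fun h : ℝ => h ^ (p + k - 1))
    (c : ℝ → ℝ) (a : ℝ → ℕ → ℝ)
    (hinterp : ∀ dt : ℝ, 0 < dt → ∀ j : Fin k,
      u (dt / n j) = c dt - ∑ m ∈ Finset.Icc p (p + k - 2), a dt m * (dt / n j) ^ m) :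
    (fun dt : ℝ => c dt - L) =O[nhdsWithin 0 (Set.Ioi 0)] fun dt : ℝ => dt ^ (p + k - 1) := by
  haveI : NeZero k := ⟨by omega⟩
  classical
  set X : Fin k → ℝ := fun j => (n j)⁻¹ with hX
  -- the fixed linear map (independent of dt)
  set T : (Fin k → ℝ) →ₗ[ℝ] (Fin k → ℝ) :=
    { toFun := fun v j => v 0 + ∑ i ∈ Finset.univ.erase (0 : Fin k),
        v i * X j ^ (p + (i : ℕ) - 1)
      map_add' := fun v w => by
        funext j
        simp only [Pi.add_apply, add_mul, Finset.sum_add_distrib]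
        ring
      map_smul' := fun r v => by
        funext j
        simp only [Pi.smul_apply, smul_eq_mul, RingHom.id_apply, mul_add,
          Finset.mul_sum, mul_assoc] } with hT
  have hTapp : ∀ v : Fin k → ℝ, ∀ j, T v j = v 0 + ∑ i ∈ Finset.univ.erase (0 : Fin k),
      v i * X j ^ (p + (i : ℕ) - 1) := fun v j => rfl
  have hTinj : Function.Injective T := by
    rw [← LinearMap.ker_eq_bot, LinearMap.ker_eq_bot']
    intro v hv
    apply vandermonde_type_injective hp (fun j => X j.rev) ?_ (fun j => by
      simpa [hX] using inv_pos.mpr (hnpos j.rev)) v ?_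
    · intro i j hij
      have h1 : j.rev < i.rev := Fin.rev_lt_rev.mpr hij
      exact (inv_lt_inv₀ (hnpos _) (hnpos _)).mpr (hn h1)
    · intro j
      have := congrFun hv j.rev
      rw [hTapp] at this
      simpa using this
  set eq : (Fin k → ℝ) ≃ₗ[ℝ] (Fin k → ℝ) :=
    LinearEquiv.ofBijective T ⟨hTinj, LinearMap.injective_iff_surjective.mp hTinj⟩ with heq
  set E := eq.toContinuousLinearEquiv with hE
  set C := ‖(E.symm : (Fin k → ℝ) →L[ℝ] (Fin k → ℝ))‖ with hC
  have key : ∀ v : Fin k → ℝ, ‖v 0‖ ≤ C * ‖T v‖ := by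
    intro v
    have h1 : E.symm (T v) = v := by
      have h2 : T v = E v := rfl
      rw [h2, ContinuousLinearEquiv.symm_apply_apply]
    calc ‖v 0‖ ≤ ‖v‖ := norm_le_pi_norm v 0
      _ = ‖E.symm (T v)‖ := by rw [h1]
      _ ≤ C * ‖T v‖ := (E.symm : (Fin k → ℝ) →L[ℝ] (Fin k → ℝ)).le_opNorm _
  -- residuals are O(dt^N)
  have hcomp : ∀ j : Fin k, (fun dt : ℝ => u (dt / n j) -
      (L + ∑ m ∈ Finset.Icc p (p + k - 2), e m * (dt / n j) ^ m))
      =O[nhdsWithin 0 (Set.Ioi 0)] fun dt : ℝ => dt ^ (p + k - 1) := by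
    intro j
    have htend : Tendsto (fun dt : ℝ => dt / n j)
        (nhdsWithin 0 (Set.Ioi 0)) (nhdsWithin 0 (Set.Ioi 0)) := by
      apply tendsto_nhdsWithin_of_tendsto_nhds_of_eventually_within
      · have h1 : Tendsto (fun dt : ℝ => dt / n j) (nhds 0) (nhds (0 / n j)) :=
          (continuous_id.div_const (n j)).tendsto 0
        rw [zero_div] at h1
        exact h1.mono_left nhdsWithin_le_nhds
      · filter_upwards [self_mem_nhdsWithin] with dt hdt
        exact div_pos hdt (hnpos j)
    have h1 := hexp.comp_tendsto htend
    have h2 : (fun dt : ℝ => (dt / n j) ^ (p + k - 1))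
        =O[nhdsWithin 0 (Set.Ioi 0)] fun dt : ℝ => dt ^ (p + k - 1) := by
      apply Asymptotics.IsBigO.of_bound (((n j)⁻¹) ^ (p + k - 1))
      filter_upwards with dt
      have h3 : (dt / n j) ^ (p + k - 1) = dt ^ (p + k - 1) * ((n j)⁻¹) ^ (p + k - 1) := by
        rw [div_eq_mul_inv, mul_pow]
      have h4 : ‖(dt / n j) ^ (p + k - 1)‖
          = ((n j)⁻¹) ^ (p + k - 1) * ‖dt ^ (p + k - 1)‖ := by
        rw [h3, norm_mul, mul_comm, Real.norm_eq_abs,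
          abs_of_nonneg (le_of_lt (pow_pos (inv_pos.mpr (hnpos j)) _))]
      exact le_of_eq h4
    exact h1.trans h2
  have hRsum : (fun dt : ℝ => ∑ j : Fin k, |u (dt / n j) -
      (L + ∑ m ∈ Finset.Icc p (p + k - 2), e m * (dt / n j) ^ m)|)
      =O[nhdsWithin 0 (Set.Ioi 0)] fun dt : ℝ => dt ^ (p + k - 1) :=
    (Asymptotics.IsBigO.sum (s := Finset.univ) fun j _ => (hcomp j).abs_left).congr_left
      fun dt => Finset.sum_apply dt _ _
  refine Asymptotics.IsBigO.trans ?_ hRsum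
  apply Asymptotics.IsBigO.of_bound C
  filter_upwards [self_mem_nhdsWithin] with dt hdt
  have hdt' : (0 : ℝ) < dt := hdt
  set v : Fin k → ℝ := fun i => if i = 0 then c dt - L
      else -((e (p + (i : ℕ) - 1) + a dt (p + (i : ℕ) - 1)) * dt ^ (p + (i : ℕ) - 1)) with hv
  have hTv : ∀ j, T v j = u (dt / n j) -
      (L + ∑ m ∈ Finset.Icc p (p + k - 2), e m * (dt / n j) ^ m) := by
    intro j
    rw [hTapp]
    have hterm : ∀ i ∈ Finset.univ.erase (0 : Fin k),
        v i * X j ^ (p + (i : ℕ) - 1)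
          = (fun m => -((e m + a dt m) * (dt / n j) ^ m)) (p + (i : ℕ) - 1) := by
      intro i hi
      have hi0 : i ≠ 0 := (Finset.mem_erase.mp hi).1
      simp only [hv, if_neg hi0, hX]
      rw [div_eq_mul_inv, mul_pow]
      ring
    rw [Finset.sum_congr rfl hterm,
      sum_erase_fin_eq_Icc hp (fun m => -((e m + a dt m) * (dt / n j) ^ m))]
    rw [show v 0 = c dt - L from if_pos rfl, hinterp dt hdt' j]
    have hsplit : ∀ m ∈ Finset.Icc p (p + k - 2),
        (fun m => -((e m + a dt m) * (dt / n j) ^ m)) m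
          = -(e m * (dt / n j) ^ m) + -(a dt m * (dt / n j) ^ m) := fun m _ => by ring
    rw [Finset.sum_congr rfl hsplit, Finset.sum_add_distrib,
      Finset.sum_neg_distrib, Finset.sum_neg_distrib]
    ring
  have h1 : ‖c dt - L‖ ≤ C * ‖T v‖ := by
    have h2 := key v
    rw [hv] at h2
    simpa using h2
  have h2 : ‖T v‖ ≤ ∑ j : Fin k, |u (dt / n j) -
      (L + ∑ m ∈ Finset.Icc p (p + k - 2), e m * (dt / n j) ^ m)| := by
    refine (pi_norm_le_iff_of_nonneg ?_).mpr fun j => ?_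
    · exact Finset.sum_nonneg fun j _ => abs_nonneg _
    rw [hTv j, Real.norm_eq_abs]
    exact Finset.single_le_sum (f := fun j : Fin k => |u (dt / n j) -
        (L + ∑ m ∈ Finset.Icc p (p + k - 2), e m * (dt / n j) ^ m)|)
      (fun j _ => abs_nonneg _) (Finset.mem_univ j)
  calc ‖c dt - L‖ ≤ C * ‖T v‖ := h1
    _ ≤ C * (∑ j : Fin k, |u (dt / n j) -
        (L + ∑ m ∈ Finset.Icc p (p + k - 2), e m * (dt / n j) ^ m)|) := by
        exact mul_le_mul_of_nonneg_left h2 (norm_nonneg _)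
    _ ≤ C * ‖∑ j : Fin k, |u (dt / n j) -
        (L + ∑ m ∈ Finset.Icc p (p + k - 2), e m * (dt / n j) ^ m)|‖ := by
        rw [Real.norm_eq_abs, abs_of_nonneg (Finset.sum_nonneg fun j _ => abs_nonneg _)]
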